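/- Let n ≥ 1 and τ ≥ 0. Then Ω_n(τ) ⊆ Ω(τ): if ω ∈ ℝⁿ and C > 0 satisfy ‖Tω‖_ℤ ≥ C·T^{-(1+τ)/n} for every positive integer T, then ω ∉ ℚⁿ and the periods of ω satisfy T_{i+1}(ω) ≤ C^{-n}·T_i(ω)^{1+τ} for every i ∈ ℕ. -/

import Mathlib

open Finset

/-- Sup norm on `ℝⁿ`. -/
noncomputable def supNorm {n : ℕ} (x : Fin n → ℝ) : ℝ := ⨆ i, |x i|

/-- Sup-norm distance from `x ∈ ℝⁿ` to the lattice `ℤⁿ`. -/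
noncomputable def distZ {n : ℕ} (x : Fin n → ℝ) : ℝ :=
  sInf {r : ℝ | ∃ k : Fin n → ℤ, r = supNorm (fun i => x i - k i)}

/-- Distance from a real number to `ℤ`. -/
noncomputable def distZ1 (t : ℝ) : ℝ := sInf {r : ℝ | ∃ m : ℤ, r = |t - m|}

/-- `ω ∈ ℚⁿ`. -/
def IsRationalVec {n : ℕ} (ω : Fin n → ℝ) : Prop := ∀ i, ∃ q : ℚ, (q : ℝ) = ω i

/-- `ω` is resonant: some nonzero integer vector `k` has `⟨k, ω⟩ ∈ ℤ`. -/
def Resonant {n : ℕ} (ω : Fin n → ℝ) : Prop :=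
  ∃ k : Fin n → ℤ, k ≠ 0 ∧ ∃ m : ℤ, ∑ i, (k i : ℝ) * ω i = (m : ℝ)

/-- The sequence of periods of `ω`. -/
noncomputable def periods {n : ℕ} (ω : Fin n → ℝ) : ℕ → ℕ
  | 0 => 1
  | i + 1 => sInf {T : ℕ | 1 ≤ T ∧
      distZ (fun j => (T : ℝ) * ω j) < distZ (fun j => (periods ω i : ℝ) * ω j)}

/-- The resonance module of `ω`, as a subgroup of `ℤⁿ`. -/
def resModule {n : ℕ} (ω : Fin n → ℝ) : AddSubgroup (Fin n → ℤ) where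
  carrier := {k | ∃ m : ℤ, ∑ i, (k i : ℝ) * ω i = (m : ℝ)}
  zero_mem' := ⟨0, by simp⟩
  add_mem' := by
    rintro a b ⟨ma, ha⟩ ⟨mb, hb⟩
    refine ⟨ma + mb, ?_⟩
    push_cast
    simp only [Pi.add_apply, Int.cast_add, add_mul, Finset.sum_add_distrib, ha, hb]
  neg_mem' := by
    rintro a ⟨m, hm⟩
    refine ⟨-m, ?_⟩
    push_cast
    simp [neg_mul, Finset.sum_neg_distrib, hm]

open MeasureTheory Submodule

section aux
variable {n : ℕ}

lemma supNorm_nonneg (x : Fin n → ℝ) : 0 ≤ supNorm x := by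
  rcases isEmpty_or_nonempty (Fin n) with h | h
  · simp [supNorm, ciSup_of_empty]
  · exact le_ciSup_of_le (Set.Finite.bddAbove (Set.finite_range _)) h.some (abs_nonneg _)

lemma abs_le_supNorm (x : Fin n → ℝ) (i : Fin n) : |x i| ≤ supNorm x :=
  le_ciSup (f := fun i => |x i|) (Set.Finite.bddAbove (Set.finite_range _)) i

lemma supNorm_le [Nonempty (Fin n)] {x : Fin n → ℝ} {r : ℝ} (h : ∀ i, |x i| ≤ r) :
    supNorm x ≤ r := ciSup_le h

lemma distZ_le (x : Fin n → ℝ) (k : Fin n → ℤ) :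
    distZ x ≤ supNorm (fun i => x i - k i) :=
  csInf_le ⟨0, by rintro r ⟨k', rfl⟩; exact supNorm_nonneg _⟩ ⟨k, rfl⟩

lemma distZ_nonneg (x : Fin n → ℝ) : 0 ≤ distZ x :=
  le_csInf ⟨_, ⟨0, rfl⟩⟩ (by rintro r ⟨k, rfl⟩; exact supNorm_nonneg _)

lemma round_min (x : ℝ) (m : ℤ) : |x - round x| ≤ |x - m| := by
  rw [abs_sub_round_eq_min]
  have hf : Int.fract x = x - ⌊x⌋ := rfl
  rcases le_or_gt m ⌊x⌋ with h | h
  · have h' : (m : ℝ) ≤ (⌊x⌋ : ℝ) := by exact_mod_cast h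
    refine le_trans (min_le_left _ _) (le_trans ?_ (le_abs_self _))
    rw [hf]; linarith
  · have h' : (⌊x⌋ : ℝ) + 1 ≤ (m : ℝ) := by exact_mod_cast h
    refine le_trans (min_le_right _ _) ?_
    rw [abs_sub_comm]
    refine le_trans ?_ (le_abs_self _)
    rw [hf]; linarith

lemma distZ_le_half [Nonempty (Fin n)] (x : Fin n → ℝ) : distZ x ≤ 1 / 2 :=
  le_trans (distZ_le x (fun i => round (x i))) (supNorm_le fun i => abs_sub_round (x i))

lemma supNorm_zero : supNorm (fun _ : Fin n => (0:ℝ)) = 0 := by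
  rcases isEmpty_or_nonempty (Fin n) with h | h
  · simp [supNorm, ciSup_of_empty]
  · simp [supNorm]

lemma distZ_int (m : Fin n → ℤ) : distZ (fun i => (m i : ℝ)) = 0 := by
  refine le_antisymm ?_ (distZ_nonneg _)
  have := distZ_le (fun i => (m i : ℝ)) m
  simpa [supNorm_zero] using this

end aux

lemma dirichlet {n : ℕ} (hn : 1 ≤ n) (ω : Fin n → ℝ) {Q : ℝ} (hQ : 1 < Q) :
    ∃ T : ℕ, 1 ≤ T ∧ (T : ℝ) ≤ Q ^ n ∧ distZ (fun j => (T : ℝ) * ω j) ≤ 1 / Q := by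
  haveI : Nonempty (Fin n) := Fin.pos_iff_nonempty.mp hn
  have hQ0 : 0 < Q := lt_trans one_pos hQ
  set b := Pi.basisFun ℝ (Fin (n+1)) with hb
  -- the linear involution
  set φ : (Fin (n+1) → ℝ) →ₗ[ℝ] (Fin (n+1) → ℝ) :=
    LinearMap.pi (fun i => Fin.cases (LinearMap.proj 0)
      (fun j => ω j • (LinearMap.proj (0 : Fin (n+1)) : (Fin (n+1) → ℝ) →ₗ[ℝ] ℝ)
        - LinearMap.proj j.succ) i) with hφ
  have hφ0 : ∀ v, φ v 0 = v 0 := by intro v; simp [hφ, LinearMap.pi_apply]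
  have hφs : ∀ v (j : Fin n), φ v j.succ = ω j * v 0 - v j.succ := by
    intro v j; simp [hφ, LinearMap.pi_apply]
  have hinv : Function.Involutive φ := by
    intro v; funext i
    induction i using Fin.cases with
    | zero => rw [hφ0, hφ0]
    | succ j => rw [hφs, hφs, hφ0]; ring
  have hdet : |LinearMap.det φ| = 1 := by
    have h2 : LinearMap.det φ * LinearMap.det φ = 1 := by
      rw [← LinearMap.det_comp]
      have : φ ∘ₗ φ = LinearMap.id := LinearMap.ext (fun v => hinv v)
      rw [this, LinearMap.det_id]
    rcases mul_self_eq_one_iff.mp h2 with h | h <;> rw [h] <;> norm_num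
  set a : Fin (n+1) → ℝ := Fin.cons (Q ^ n) (fun _ => 1 / Q) with ha
  set box : Set (Fin (n+1) → ℝ) := Set.univ.pi (fun i => Set.Icc (-(a i)) (a i)) with hbox
  set s : Set (Fin (n+1) → ℝ) := φ ⁻¹' box with hs
  have hmem_box : ∀ v : Fin (n+1) → ℝ, v ∈ box ↔ ∀ i, |v i| ≤ a i := by
    intro v
    simp only [hbox, Set.mem_pi, Set.mem_univ, forall_true_left, Set.mem_Icc, ← abs_le]
  have hsymm : ∀ x ∈ s, -x ∈ s := by
    intro x hx
    simp only [hs, Set.mem_preimage, map_neg] at *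
    rw [hmem_box] at *
    intro i; simpa using hx i
  have hconv : Convex ℝ s :=
    (convex_pi (fun i _ => convex_Icc _ _)).linear_preimage φ
  have himg : s = φ '' box := by
    ext x
    constructor
    · intro hx; exact ⟨φ x, hx, hinv x⟩
    · rintro ⟨y, hy, rfl⟩; simp only [hs, Set.mem_preimage, hinv y]; exact hy
  have hcpt : IsCompact s := by
    rw [himg]
    exact (isCompact_univ_pi (fun i => isCompact_Icc)).image φ.continuous_of_finiteDimensional
  have ha_nonneg : ∀ i, 0 ≤ a i := by
    intro i
    induction i using Fin.cases with
    | zero => simp [ha]; positivity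
    | succ j => simp [ha]; positivity
  have hvol_box : volume box = ENNReal.ofReal (2 ^ (n+1)) := by
    rw [hbox, volume_pi_pi]
    have : ∀ i, volume (Set.Icc (-(a i)) (a i)) = ENNReal.ofReal (2 * a i) := by
      intro i; rw [Real.volume_Icc]; congr 1; ring
    simp_rw [this]
    rw [Fin.prod_univ_succ]
    simp only [ha, Fin.cons_zero, Fin.cons_succ]
    rw [Finset.prod_const, Finset.card_univ, Fintype.card_fin,
      ← ENNReal.ofReal_pow (by positivity), ← ENNReal.ofReal_mul (by positivity)]
    congr 1
    field_simp
    rw [div_pow, mul_assoc, mul_div_assoc', mul_div_right_comm, div_self (pow_ne_zero n hQ0.ne'), one_mul]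
    ring
  have hvol_s : volume s = ENNReal.ofReal (2 ^ (n+1)) := by
    rw [himg, MeasureTheory.Measure.addHaar_image_linearMap volume φ box, hdet, hvol_box]
    simp
  -- fundamental domain
  have fund := ZSpan.isAddFundamentalDomain' b (volume : Measure (Fin (n+1) → ℝ))
  have hvolF : volume (ZSpan.fundamentalDomain b) = 1 := by
    rw [hb, ZSpan.fundamentalDomain_pi_basisFun, volume_pi_pi]
    simp [Real.volume_Ico]
  haveI : Countable (span ℤ (Set.range ⇑b)).toAddSubgroup := by
    change Countable (span ℤ (Set.range ⇑b))
    infer_instance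
  obtain ⟨x, hx0, hxs⟩ := exists_ne_zero_mem_lattice_of_measure_mul_two_pow_le_measure
    fund hsymm hconv hcpt (by
      rw [hvolF, hvol_s, one_mul, Module.finrank_fin_fun]
      rw [ENNReal.ofReal_pow (by norm_num)]
      simp)
  -- integer coordinates
  have hmem : (x : Fin (n+1) → ℝ) ∈ span ℤ (Set.range ⇑b) := x.2
  have hint : ∀ i, ∃ z : ℤ, (x : Fin (n+1) → ℝ) i = (z : ℝ) := by
    intro i
    refine span_induction (p := fun y _ => ∃ z : ℤ, y i = (z : ℝ)) ?_ ?_ ?_ ?_ hmem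
    · rintro y ⟨j, rfl⟩
      simp only [hb, Pi.basisFun_apply]
      by_cases h : j = i
      · exact ⟨1, by subst h; simp⟩
      · exact ⟨0, by simp [Pi.single_apply, h]⟩
    · exact ⟨0, by simp⟩
    · rintro u v hu hv ⟨zu, hzu⟩ ⟨zv, hzv⟩
      exact ⟨zu + zv, by push_cast [Pi.add_apply, hzu, hzv]; ring⟩
    · rintro c u hu ⟨zu, hzu⟩
      exact ⟨c * zu, by push_cast [Pi.smul_apply, hzu]; simp [hzu]⟩
  choose z hz using hint
  have hbx : ∀ i, |φ (x : Fin (n+1) → ℝ) i| ≤ a i := (hmem_box _).mp hxs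
  have h0 : |((x : Fin (n+1) → ℝ)) 0| ≤ Q ^ n := by
    have := hbx 0; rwa [hφ0, ha, Fin.cons_zero] at this
  have hjs : ∀ j : Fin n, |ω j * ((x : Fin (n+1) → ℝ)) 0 - ((x : Fin (n+1) → ℝ)) j.succ| ≤ 1 / Q := by
    intro j
    have := hbx j.succ; rwa [hφs, ha, Fin.cons_succ] at this
  have ht0 : z 0 ≠ 0 := by
    intro h
    apply hx0
    have hx00 : ((x : Fin (n+1) → ℝ)) 0 = 0 := by rw [hz 0, h]; simp
    have hzs : ∀ j : Fin n, z j.succ = 0 := by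
      intro j
      have := hjs j
      rw [hx00, mul_zero, zero_sub, abs_neg, hz j.succ] at this
      have h1 : |(z j.succ : ℝ)| < 1 := lt_of_le_of_lt this (by
        rw [div_lt_one hQ0]; exact hQ)
      exact_mod_cast Int.abs_lt_one_iff.mp (by exact_mod_cast h1)
    have : (x : Fin (n+1) → ℝ) = 0 := by
      funext i
      induction i using Fin.cases with
      | zero => exact hx00
      | succ j => rw [hz j.succ, hzs j]; simp
    exact_mod_cast Subtype.ext this
  refine ⟨(z 0).natAbs, Int.natAbs_pos.mpr ht0, ?_, ?_⟩
  · rw [Nat.cast_natAbs, Int.cast_abs, ← hz 0]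
    exact h0
  · rcases le_or_gt 0 (z 0) with hpos | hneg
    · have hTz : (((z 0).natAbs : ℝ)) = (z 0 : ℝ) := by
        rw [Nat.cast_natAbs, Int.cast_abs, abs_of_nonneg (by exact_mod_cast hpos : (0:ℝ) ≤ (z 0 : ℝ))]
      refine le_trans (distZ_le _ (fun j => z j.succ)) (supNorm_le ?_)
      intro j
      have := hjs j
      rw [hz 0, hz j.succ] at this
      rw [hTz, ← hz j.succ, hz j.succ]
      calc |(z 0 : ℝ) * ω j - (z j.succ : ℝ)| = |ω j * (z 0 : ℝ) - (z j.succ : ℝ)| := by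
            rw [mul_comm]
        _ ≤ 1 / Q := this
    · have hTz : (((z 0).natAbs : ℝ)) = -(z 0 : ℝ) := by
        rw [Nat.cast_natAbs, Int.cast_abs, abs_of_neg (by exact_mod_cast hneg : (z 0 : ℝ) < 0)]
      refine le_trans (distZ_le _ (fun j => -(z j.succ))) (supNorm_le ?_)
      intro j
      have := hjs j
      rw [hz 0, hz j.succ] at this
      rw [hTz]
      calc |(-(z 0 : ℝ)) * ω j - ((-(z j.succ) : ℤ) : ℝ)|
          = |-(ω j * (z 0 : ℝ) - (z j.succ : ℝ))| := by push_cast; ring_nf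
        _ = |ω j * (z 0 : ℝ) - (z j.succ : ℝ)| := abs_neg _
        _ ≤ 1 / Q := this


/-- `Ω_n(τ) ⊆ Ω(τ)`, with the explicit constant `C^{-n}`. -/
theorem stmt15 {n : ℕ} (hn : 1 ≤ n) (τ : ℝ) (hτ : 0 ≤ τ) (ω : Fin n → ℝ)
    (C : ℝ) (hC : 0 < C)
    (hΩ : ∀ T : ℕ, 1 ≤ T →
      distZ (fun j => (T : ℝ) * ω j) ≥ C * (T : ℝ) ^ (-(1 + τ) / (n : ℝ))) :
    ¬ IsRationalVec ω ∧
      ∀ i : ℕ, (periods ω (i + 1) : ℝ) ≤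
        C ^ (-(n : ℝ)) * (periods ω i : ℝ) ^ (1 + τ) := by
  haveI : Nonempty (Fin n) := Fin.pos_iff_nonempty.mp hn
  have hn0 : (n : ℝ) ≠ 0 := Nat.cast_ne_zero.mpr (by omega)
  constructor
  · intro h
    choose q hq using h
    set T : ℕ := ∏ i, (q i).den with hT
    have hT1 : 1 ≤ T :=
      Nat.one_le_iff_ne_zero.mpr (Finset.prod_ne_zero_iff.mpr fun i _ => (q i).den_ne_zero)
    have hTpos : (0:ℝ) < (T:ℝ) := by exact_mod_cast hT1
    have hzero : distZ (fun j => (T:ℝ) * ω j) = 0 := by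
      have hfe : (fun j => (T:ℝ) * ω j)
          = fun j => ((((q j).num * ∏ i ∈ univ.erase j, ((q i).den : ℤ)) : ℤ) : ℝ) := by
        funext j
        rw [← hq j]
        push_cast
        rw [hT]
        push_cast
        rw [← Finset.mul_prod_erase univ (fun i => ((q i).den : ℝ)) (mem_univ j),
          Rat.cast_def]
        have hden : ((q j).den : ℝ) ≠ 0 := by exact_mod_cast (q j).den_ne_zero
        field_simp
      rw [hfe, distZ_int]
    have hcontra := hΩ T hT1
    rw [hzero] at hcontra
    have : (0:ℝ) < C * (T:ℝ) ^ (-(1 + τ) / (n : ℝ)) := by positivity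
    linarith
  · have key : ∀ p : ℕ, 1 ≤ p → ∃ T : ℕ, 1 ≤ T ∧
        (T:ℝ) ≤ C ^ (-(n:ℝ)) * (p:ℝ) ^ (1+τ) ∧
        distZ (fun j => (T:ℝ) * ω j) < distZ (fun j => (p:ℝ) * ω j) := by
      intro p hp
      set d := distZ (fun j => (p:ℝ) * ω j) with hd
      have hppos : (0:ℝ) < (p:ℝ) := by exact_mod_cast hp
      have hd_lb : C * (p:ℝ) ^ (-(1+τ)/(n:ℝ)) ≤ d := hΩ p hp
      have hd_pos : 0 < d := lt_of_lt_of_le (by positivity) hd_lb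
      have hd_half : d ≤ 1/2 := distZ_le_half _
      have h2d : 2 ≤ 1/d := by rw [le_div_iff₀ hd_pos]; linarith
      set R := C ^ (-(n:ℝ)) * (p:ℝ) ^ (1+τ) with hR
      have hinv_le : 1/d ≤ C⁻¹ * (p:ℝ) ^ ((1+τ)/(n:ℝ)) := by
        have hpow : (0:ℝ) < C * (p:ℝ) ^ (-(1+τ)/(n:ℝ)) := by positivity
        calc 1/d ≤ 1/(C * (p:ℝ) ^ (-(1+τ)/(n:ℝ))) := one_div_le_one_div_of_le hpow hd_lb
          _ = C⁻¹ * (p:ℝ) ^ ((1+τ)/(n:ℝ)) := by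
              rw [one_div, mul_inv, ← Real.rpow_neg hppos.le, neg_div, neg_neg]
      have hCpow : (C⁻¹)^n = C ^ (-(n:ℝ)) := by
        rw [inv_pow, ← Real.rpow_natCast C n, ← Real.rpow_neg hC.le]
      have hppow : ((p:ℝ) ^ ((1+τ)/(n:ℝ)))^n = (p:ℝ)^(1+τ) := by
        rw [← Real.rpow_natCast ((p:ℝ) ^ ((1+τ)/(n:ℝ))) n, ← Real.rpow_mul hppos.le,
          div_mul_cancel₀ _ hn0]
      have hRn : (1/d)^n ≤ R := by
        calc (1/d)^n ≤ (C⁻¹ * (p:ℝ) ^ ((1+τ)/(n:ℝ)))^n :=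
              pow_le_pow_left₀ (by positivity) hinv_le n
          _ = R := by rw [mul_pow, hCpow, hppow]
      set M := ⌊R⌋₊ with hM
      have hRM : R < (M:ℝ) + 1 := Nat.lt_floor_add_one R
      have hdn_pos : 0 < (1/d)^n := by positivity
      set G := ((1/d)^n + ((M:ℝ)+1))/2 with hG
      have hG1 : (1/d)^n < G := by rw [hG]; linarith
      have hG2 : G < (M:ℝ)+1 := by rw [hG]; linarith
      have hGpos : 0 < G := lt_trans hdn_pos hG1
      set Q := G ^ ((n:ℝ)⁻¹) with hQdef
      have hQn : Q^n = G := by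
        rw [hQdef, ← Real.rpow_natCast (G ^ ((n:ℝ)⁻¹)) n, ← Real.rpow_mul hGpos.le,
          inv_mul_cancel₀ hn0, Real.rpow_one]
      have hQgt : 1/d < Q := by
        have h1 : (1/d) = ((1/d)^n) ^ ((n:ℝ)⁻¹) := by
          rw [← Real.rpow_natCast (1/d) n, ← Real.rpow_mul (by positivity),
            mul_inv_cancel₀ hn0, Real.rpow_one]
        rw [h1, hQdef]
        exact Real.rpow_lt_rpow hdn_pos.le hG1 (by positivity)
      have hQ1 : 1 < Q := by linarith
      obtain ⟨T, hT1, hTle, hTd⟩ := dirichlet hn ω hQ1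
      refine ⟨T, hT1, ?_, ?_⟩
      · have h1 : (T:ℝ) < (M:ℝ) + 1 := by rw [hQn] at hTle; linarith
        have h2 : T ≤ M := by exact_mod_cast Nat.lt_add_one_iff.mp (by exact_mod_cast h1)
        calc (T:ℝ) ≤ (M:ℝ) := by exact_mod_cast h2
          _ ≤ R := Nat.floor_le (by positivity)
      · refine lt_of_le_of_lt hTd ?_
        rw [div_lt_iff₀ (by positivity : (0:ℝ) < Q)]
        rw [div_lt_iff₀ hd_pos] at hQgt
        linarith
    have hsucc : ∀ i : ℕ, periods ω (i+1) = sInf {T : ℕ | 1 ≤ T ∧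
        distZ (fun j => (T : ℝ) * ω j) < distZ (fun j => (periods ω i : ℝ) * ω j)} :=
      fun _ => rfl
    have hper : ∀ i, 1 ≤ periods ω i := by
      intro i
      induction i with
      | zero => exact le_refl 1
      | succ i ih =>
        obtain ⟨T, hT1, _, hT3⟩ := key (periods ω i) ih
        have hne : {T : ℕ | 1 ≤ T ∧ distZ (fun j => (T : ℝ) * ω j)
            < distZ (fun j => (periods ω i : ℝ) * ω j)}.Nonempty := ⟨T, hT1, hT3⟩
        rw [hsucc]
        exact (Nat.sInf_mem hne).1
    intro i
    obtain ⟨T, hT1, hT2, hT3⟩ := key (periods ω i) (hper i)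
    have hle : periods ω (i+1) ≤ T := by rw [hsucc]; exact Nat.sInf_le ⟨hT1, hT3⟩
    exact le_trans (by exact_mod_cast hle) hT2
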